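/- Define u(x,y) = |y| − (1/2)cosh(2x) and v(x,y) = −y·sinh(2x). Then at every point (x,y) with y ≠ 0, u and v are differentiable and satisfy ∂u/∂x = ∂v/∂y and ∂v/∂x = −2(v² + y²)^{1/2} ∂u/∂y. -/

import Mathlib

/- STATEMENT 2: u(x,y) = |y| − ½cosh 2x, v(x,y) = −y·sinh 2x are differentiable at
every point with y ≠ 0 and satisfy ∂u/∂x = ∂v/∂y, ∂v/∂x = −2(v²+y²)^{1/2} ∂u/∂y there. -/
theorem stmt2 (u v : ℝ × ℝ → ℝ)
    (hu : u = fun p => |p.2| - (1/2) * Real.cosh (2 * p.1))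
    (hv : v = fun p => -p.2 * Real.sinh (2 * p.1)) :
    ∀ p : ℝ × ℝ, p.2 ≠ 0 →
      DifferentiableAt ℝ u p ∧ DifferentiableAt ℝ v p ∧
      fderiv ℝ u p (1, 0) = fderiv ℝ v p (0, 1) ∧
      fderiv ℝ v p (1, 0)
        = -2 * Real.sqrt ((v p) ^ 2 + p.2 ^ 2) * fderiv ℝ u p (0, 1) := by
  subst hu hv
  rintro ⟨a, b⟩ hb
  simp only [ne_eq] at hb
  -- the sign of b
  set s : ℝ := if 0 < b then 1 else -1 with hs
  have hs2 : s * s = 1 := by rw [hs]; split_ifs <;> norm_num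
  have hsb : s * b = |b| := by
    rw [hs]; split_ifs with h
    · rw [abs_of_pos h]; ring
    · rw [abs_of_neg (lt_of_le_of_ne (not_lt.mp h) hb)]; ring
  -- derivative of x ↦ 2x
  have hx1 : HasFDerivAt (fun p : ℝ × ℝ => (2:ℝ) * p.1)
      ((2:ℝ) • ContinuousLinearMap.fst ℝ ℝ ℝ) (a, b) :=
    (hasFDerivAt_fst (𝕜 := ℝ)).const_mul 2
  have hcosh : HasFDerivAt (fun p : ℝ × ℝ => Real.cosh (2 * p.1))
      ((2 * Real.sinh (2 * a)) • ContinuousLinearMap.fst ℝ ℝ ℝ) (a, b) := by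
    have := (Real.hasDerivAt_cosh (2 * a)).comp_hasFDerivAt (a, b) hx1
    simpa [smul_smul, mul_comm, Function.comp_def] using this
  have hsinh : HasFDerivAt (fun p : ℝ × ℝ => Real.sinh (2 * p.1))
      ((2 * Real.cosh (2 * a)) • ContinuousLinearMap.fst ℝ ℝ ℝ) (a, b) := by
    have := (Real.hasDerivAt_sinh (2 * a)).comp_hasFDerivAt (a, b) hx1
    simpa [smul_smul, mul_comm, Function.comp_def] using this
  -- derivative of v
  have hv' : HasFDerivAt (fun p : ℝ × ℝ => -p.2 * Real.sinh (2 * p.1))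
      ((-b) • ((2 * Real.cosh (2 * a)) • ContinuousLinearMap.fst ℝ ℝ ℝ)
        + Real.sinh (2 * a) • (-(ContinuousLinearMap.snd ℝ ℝ ℝ))) (a, b) :=
    ((hasFDerivAt_snd (𝕜 := ℝ)).neg).mul hsinh
  -- u agrees with a smooth function near (a,b)
  have hev : (fun p : ℝ × ℝ => |p.2| - (1/2) * Real.cosh (2 * p.1))
      =ᶠ[nhds ((a, b) : ℝ × ℝ)] (fun p => s * p.2 - (1/2) * Real.cosh (2 * p.1)) := by
    rcases lt_or_gt_of_ne hb with h | h
    · have hmem : ∀ᶠ p : ℝ × ℝ in nhds (a, b), p.2 < 0 :=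
        (isOpen_lt continuous_snd continuous_const).eventually_mem (by simpa using h)
      filter_upwards [hmem] with p hp
      rw [abs_of_neg hp, hs, if_neg (by simpa using not_lt.mpr h.le)]
      ring
    · have hmem : ∀ᶠ p : ℝ × ℝ in nhds (a, b), 0 < p.2 :=
        (isOpen_lt continuous_const continuous_snd).eventually_mem (by simpa using h)
      filter_upwards [hmem] with p hp
      rw [abs_of_pos hp, hs, if_pos h]
      ring
  have hg : HasFDerivAt (fun p : ℝ × ℝ => s * p.2 - (1/2) * Real.cosh (2 * p.1))
      (s • ContinuousLinearMap.snd ℝ ℝ ℝ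
        - (1/2 : ℝ) • ((2 * Real.sinh (2 * a)) • ContinuousLinearMap.fst ℝ ℝ ℝ)) (a, b) :=
    ((hasFDerivAt_snd (𝕜 := ℝ)).const_mul s).sub (hcosh.const_mul (1/2))
  have hu' : HasFDerivAt (fun p : ℝ × ℝ => |p.2| - (1/2) * Real.cosh (2 * p.1))
      (s • ContinuousLinearMap.snd ℝ ℝ ℝ
        - (1/2 : ℝ) • ((2 * Real.sinh (2 * a)) • ContinuousLinearMap.fst ℝ ℝ ℝ)) (a, b) :=
    hg.congr_of_eventuallyEq hev
  refine ⟨hu'.differentiableAt, hv'.differentiableAt, ?_, ?_⟩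
  · rw [hu'.fderiv, hv'.fderiv]
    simp [ContinuousLinearMap.smul_apply]
  · rw [hu'.fderiv, hv'.fderiv]
    have hsq : (b * Real.sinh (2 * a)) ^ 2 + b ^ 2 = (|b| * Real.cosh (2 * a)) ^ 2 := by
      have := Real.cosh_sq (2 * a)
      have habs : |b| ^ 2 = b ^ 2 := sq_abs b
      nlinarith [Real.cosh_sq (2 * a), sq_abs b]
    have hsqrt : Real.sqrt ((b * Real.sinh (2 * a)) ^ 2 + b ^ 2)
        = |b| * Real.cosh (2 * a) := by
      rw [hsq, Real.sqrt_sq (by positivity)]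
    simp [hsqrt, ContinuousLinearMap.smul_apply]
    rw [← hsb]
    linear_combination (-2 * b * Real.cosh (2 * a)) * hs2
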